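/- The function Ψ(x) = 1/(x·ln(1+1/x)) is convex on the interval (0, ∞). -/

import Mathlib

open Real Set

lemma g_deriv1 {x : ℝ} (hx : 0 < x) :
    HasDerivAt (fun x : ℝ => x * Real.log (1 + 1/x))
      (Real.log (1 + 1/x) - 1/(x+1)) x := by
  have hx0 : x ≠ 0 := ne_of_gt hx
  have h1 : (0:ℝ) < 1 + 1/x := by positivity
  have hinner : HasDerivAt (fun x : ℝ => 1 + 1/x) (-(x^2)⁻¹) x := by
    simpa [one_div] using (hasDerivAt_inv hx0).const_add 1
  have hlog : HasDerivAt (fun x : ℝ => Real.log (1 + 1/x))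
      (-(x^2)⁻¹ / (1 + 1/x)) x := hinner.log (ne_of_gt h1)
  have := (hasDerivAt_id x).mul hlog
  refine this.congr_deriv ?_
  simp only [id]
  field_simp
  ring

lemma g_deriv2 {x : ℝ} (hx : 0 < x) :
    HasDerivAt (fun x : ℝ => Real.log (1 + 1/x) - 1/(x+1))
      (-(x^2)⁻¹ / (1 + 1/x) + 1/(x+1)^2) x := by
  have hx0 : x ≠ 0 := ne_of_gt hx
  have h1 : (0:ℝ) < 1 + 1/x := by positivity
  have hx1 : x + 1 ≠ 0 := by positivity
  have hinner : HasDerivAt (fun x : ℝ => 1 + 1/x) (-(x^2)⁻¹) x := by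
    simpa [one_div] using (hasDerivAt_inv hx0).const_add 1
  have hlog : HasDerivAt (fun x : ℝ => Real.log (1 + 1/x))
      (-(x^2)⁻¹ / (1 + 1/x)) x := hinner.log (ne_of_gt h1)
  have hq : HasDerivAt (fun x : ℝ => 1/(x+1)) (-((x+1)^2)⁻¹) x := by
    simpa [one_div, Function.comp_def] using ((hasDerivAt_inv hx1).comp x ((hasDerivAt_id x).add_const 1) : HasDerivAt (fun y : ℝ => (y+1)⁻¹) _ x)
  refine (hlog.sub hq).congr_deriv ?_
  field_simp
  ring

lemma g_concave : ConcaveOn ℝ (Set.Ioi (0:ℝ)) (fun x => x * Real.log (1 + 1/x)) := by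
  have hint : interior (Set.Ioi (0:ℝ)) = Set.Ioi 0 := interior_Ioi
  apply concaveOn_of_hasDerivWithinAt2_nonpos (f' := fun x => Real.log (1 + 1/x) - 1/(x+1))
    (f'' := fun x => -(x^2)⁻¹ / (1 + 1/x) + 1/(x+1)^2) (convex_Ioi 0)
  · exact fun x hx => (g_deriv1 hx).continuousAt.continuousWithinAt
  · intro x hx
    rw [hint] at hx ⊢
    exact (g_deriv1 hx).hasDerivWithinAt
  · intro x hx
    rw [hint] at hx ⊢
    exact (g_deriv2 hx).hasDerivWithinAt
  · intro x hx
    rw [hint] at hx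
    have hx : (0:ℝ) < x := hx
    have h1 : (0:ℝ) < 1 + 1/x := by positivity
    have key : -(x^2)⁻¹ / (1 + 1/x) = -(1/(x*(x+1))) := by
      field_simp
    rw [key]
    have h2 : (0:ℝ) < x * (x+1) := by positivity
    have h4 : 1/(x+1)^2 ≤ 1/(x*(x+1)) :=
      one_div_le_one_div_of_le h2 (by nlinarith)
    linarith

lemma g_pos {x : ℝ} (hx : 0 < x) : 0 < x * Real.log (1 + 1/x) := by
  have h1 : (1:ℝ) < 1 + 1/x := by
    have : (0:ℝ) < 1/x := by positivity
    linarith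
  exact mul_pos hx (Real.log_pos h1)

/-- Ψ(x) = 1/(x·ln(1+1/x)) is convex on (0, ∞). -/
theorem psi_convex :
    ConvexOn ℝ (Set.Ioi (0 : ℝ)) (fun x => 1 / (x * Real.log (1 + 1 / x))) := by
  refine ⟨convex_Ioi 0, ?_⟩
  intro x hx y hy a b ha hb hab
  simp only [smul_eq_mul]
  set g : ℝ → ℝ := fun x => x * Real.log (1 + 1/x) with hg
  have hxp : (0:ℝ) < x := hx
  have hyp : (0:ℝ) < y := hy
  have hu : 0 < g x := g_pos hxp
  have hv : 0 < g y := g_pos hyp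
  have hz : (0:ℝ) < a*x + b*y := by
    rcases eq_or_lt_of_le ha with h | h
    · simp [← h] at hab ⊢; nlinarith
    · nlinarith
  have hconc := g_concave.2 hx hy ha hb hab
  simp only [smul_eq_mul] at hconc
  have hab2 : 0 < a * g x + b * g y := by
    rcases eq_or_lt_of_le ha with h | h
    · rw [← h] at hab ⊢; simp at hab ⊢; nlinarith
    · nlinarith
  have hgz : 0 < g (a*x + b*y) := lt_of_lt_of_le hab2 hconc
  have step1 : 1 / g (a*x + b*y) ≤ 1 / (a * g x + b * g y) :=
    one_div_le_one_div_of_le hab2 hconc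
  have step2 : 1 / (a * g x + b * g y) ≤ a * (1 / g x) + b * (1 / g y) := by
    rw [mul_one_div, mul_one_div, div_add_div _ _ (ne_of_gt hu) (ne_of_gt hv),
      div_le_div_iff₀ hab2 (mul_pos hu hv)]
    have h1 : (a+b)^2 = 1 := by rw [hab]; ring
    nlinarith [mul_nonneg (mul_nonneg ha hb) (sq_nonneg (g x - g y)),
      mul_pos hu hv]
  exact step1.trans step2
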